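/- Let α > 0, η ∈ ℝ, and k ≠ 0, and let g be the SGED density: g(x) = exp(−(1/2)·(−(1/k)·log(1 − k(x−η)/α))²) / (√(2π)·α·(1 − k(x−η)/α)), supported on x < η + α/k when k > 0 and on x > η + α/k when k < 0. Then the moment generating function of the SGED fails to exist off one side of the origin: if k < 0, then for every t > 0 the integral ∫ e^{tx} g(x) dx over the support diverges; and if k > 0, then for every t < 0 the integral ∫ e^{tx} g(x) dx over the support diverges. -/

import Mathlib

open MeasureTheory

open Filter Set in
lemma aux_not_integrableOn_Ioi {f : ℝ → ℝ} {a : ℝ}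
    (hf : Tendsto f atTop atTop) : ¬ IntegrableOn f (Ioi a) volume := by
  intro h
  obtain ⟨b, hb⟩ := eventually_atTop.mp (hf.eventually (eventually_ge_atTop 1))
  have h2 : IntegrableOn f (Ioi (max a b)) volume :=
    h.mono_set (Ioi_subset_Ioi (le_max_left a b))
  have hfin := h2.2
  rw [HasFiniteIntegral] at hfin
  have hmono : volume (Ioi (max a b)) ≤ ∫⁻ x in Ioi (max a b), ‖f x‖₊ := by
    rw [← setLIntegral_one]
    refine lintegral_mono_ae ?_
    filter_upwards [ae_restrict_mem measurableSet_Ioi] with x hx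
    have h1 : (1:ℝ) ≤ f x := hb x (le_of_lt (lt_of_le_of_lt (le_max_right a b) hx))
    have : (1:ℝ) ≤ ‖f x‖ := le_trans h1 (le_abs_self _)
    rw [← ENNReal.ofReal_one, ← enorm_eq_nnnorm, ← ofReal_norm]
    exact ENNReal.ofReal_le_ofReal this
  rw [Real.volume_Ioi] at hmono
  exact absurd (lt_of_le_of_lt hmono hfin) (lt_irrefl _)

open Filter Set in
lemma aux_not_integrableOn_Iio {f : ℝ → ℝ} {a : ℝ}
    (hf : Tendsto f atBot atTop) : ¬ IntegrableOn f (Iio a) volume := by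
  intro h
  obtain ⟨b, hb⟩ := eventually_atBot.mp (hf.eventually (eventually_ge_atTop 1))
  have h2 : IntegrableOn f (Iio (min a b)) volume :=
    h.mono_set (Iio_subset_Iio (min_le_left a b))
  have hfin := h2.2
  rw [HasFiniteIntegral] at hfin
  have hmono : volume (Iio (min a b)) ≤ ∫⁻ x in Iio (min a b), ‖f x‖₊ := by
    rw [← setLIntegral_one]
    refine lintegral_mono_ae ?_
    filter_upwards [ae_restrict_mem measurableSet_Iio] with x hx
    have h1 : (1:ℝ) ≤ f x := hb x (le_of_lt (lt_of_lt_of_le hx (min_le_right a b)))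
    have : (1:ℝ) ≤ ‖f x‖ := le_trans h1 (le_abs_self _)
    rw [← ENNReal.ofReal_one, ← enorm_eq_nnnorm, ← ofReal_norm]
    exact ENNReal.ofReal_le_ofReal this
  rw [Real.volume_Iio] at hmono
  exact absurd (lt_of_le_of_lt hmono hfin) (lt_irrefl _)

open Filter Set in
lemma aux_L1 (s d K : ℝ) (hs : 0 < s) :
    Tendsto (fun y => s * y + d - K * (Real.log y) ^ 2 - Real.log y) atTop atTop := by
  have h1 : Tendsto (fun y => (Real.log y) ^ 2 / y) atTop (nhds 0) := by
    simpa using Real.tendsto_pow_log_div_mul_add_atTop 1 0 2 one_ne_zero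
  have h2 : Tendsto (fun y => Real.log y / y) atTop (nhds 0) := by
    simpa using Real.tendsto_pow_log_div_mul_add_atTop 1 0 1 one_ne_zero
  have h3 : Tendsto (fun y => s - K * ((Real.log y) ^ 2 / y) - Real.log y / y)
      atTop (nhds (s - K * 0 - 0)) :=
    (tendsto_const_nhds.sub (h1.const_mul K)).sub h2
  have h4 : Tendsto (fun y =>
      (s - K * ((Real.log y) ^ 2 / y) - Real.log y / y) * y) atTop atTop :=
    h3.pos_mul_atTop (by simpa using hs) tendsto_id
  have h5 := tendsto_atTop_add_const_right atTop d h4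
  refine h5.congr' ?_
  filter_upwards [eventually_gt_atTop (0:ℝ)] with y hy
  field_simp
  ring

/-- Density of the skewed generalized error distribution (SGED) with skewness `k ≠ 0`,
scale `α > 0` and location `η`:
`g(x) = exp(−(1/2)(−(1/k) log(1 − k(x−η)/α))²) / (√(2π) α (1 − k(x−η)/α))`. -/
noncomputable def sgedDensity (α η k x : ℝ) : ℝ :=
  Real.exp (-(1 / 2) * (-(1 / k) * Real.log (1 - k * (x - η) / α)) ^ 2) /
    (Real.sqrt (2 * Real.pi) * α * (1 - k * (x - η) / α))

open Filter Set in
lemma aux_tendsto_integrand (α η k t : ℝ) (hα : 0 < α) (hk : k ≠ 0) (l : Filter ℝ)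
    (hu : Tendsto (fun x => 1 - k * (x - η) / α) l atTop)
    (hs : 0 < -(t * α) / k) :
    Tendsto (fun x => Real.exp (t * x) * sgedDensity α η k x) l atTop := by
  set C := Real.sqrt (2 * Real.pi) * α with hCdef
  have hC : 0 < C := mul_pos (Real.sqrt_pos.2 (by positivity)) hα
  set s := -(t * α) / k with hsdef
  set d := t * (α + k * η) / k with hddef
  set K := 1 / (2 * k ^ 2) with hKdef
  have hf : Tendsto (fun y => Real.exp (s * y + d - K * (Real.log y) ^ 2 - Real.log y) / C)
      atTop atTop := by
    refine Tendsto.atTop_div_const hC ?_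
    exact Real.tendsto_exp_atTop.comp (aux_L1 s d K hs)
  have hcomp := (hf.comp hu)
  refine hcomp.congr' ?_
  filter_upwards [hu.eventually (eventually_gt_atTop (0:ℝ))] with x hx
  set u := 1 - k * (x - η) / α with hudef
  have hu0 : (0:ℝ) < u := hx
  show Real.exp (s * u + d - K * (Real.log u) ^ 2 - Real.log u) / C
      = Real.exp (t * x) * sgedDensity α η k x
  have htx : t * x = s * u + d := by
    rw [hsdef, hddef, hudef]
    field_simp
    ring
  have hsq : -(1 / 2) * (-(1 / k) * Real.log u) ^ 2 = -(K * (Real.log u) ^ 2) := by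
    rw [hKdef]; field_simp
  rw [sgedDensity]
  rw [← hudef, hsq, ← hCdef, htx]
  rw [show s * u + d - K * (Real.log u) ^ 2 - Real.log u
      = (s * u + d) + (-(K * (Real.log u) ^ 2)) + (- Real.log u) by ring]
  rw [Real.exp_add, Real.exp_add,
    show Real.exp (-Real.log u) = u⁻¹ by rw [Real.exp_neg, Real.exp_log hu0]]
  field_simp

/-- The moment generating function of the SGED fails to exist off one side of the origin:
for `k < 0` the integral `∫ e^{tx} g(x) dx` over the support `(η + α/k, ∞)` diverges for
every `t > 0`, and for `k > 0` it diverges over the support `(−∞, η + α/k)` for every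
`t < 0`. -/
theorem sged_mgf_not_exists
    (α η k : ℝ) (hα : 0 < α) (hk : k ≠ 0) :
    (k < 0 → ∀ t : ℝ, 0 < t →
      ¬ IntegrableOn (fun x => Real.exp (t * x) * sgedDensity α η k x)
        (Set.Ioi (η + α / k)) volume) ∧
    (0 < k → ∀ t : ℝ, t < 0 →
      ¬ IntegrableOn (fun x => Real.exp (t * x) * sgedDensity α η k x)
        (Set.Iio (η + α / k)) volume) := by
  constructor
  · intro hkn t ht
    have hu : Filter.Tendsto (fun x => 1 - k * (x - η) / α) Filter.atTop Filter.atTop := by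
      have hpos : 0 < -k / α := div_pos (neg_pos.2 hkn) hα
      have h := Filter.tendsto_atTop_add_const_right Filter.atTop (1 + k * η / α)
        (Filter.Tendsto.const_mul_atTop hpos Filter.tendsto_id)
      refine h.congr fun x => ?_
      field_simp
      rw [id_eq]; ring
    have hs : 0 < -(t * α) / k := by
      rw [div_pos_iff]
      right
      exact ⟨by nlinarith, hkn⟩
    exact aux_not_integrableOn_Ioi (aux_tendsto_integrand α η k t hα hk Filter.atTop hu hs)
  · intro hkp t ht
    have hu : Filter.Tendsto (fun x => 1 - k * (x - η) / α) Filter.atBot Filter.atTop := by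
      have hneg : -k / α < 0 := div_neg_of_neg_of_pos (neg_neg_iff_pos.2 hkp) hα
      have h := Filter.tendsto_atTop_add_const_right Filter.atBot (1 + k * η / α)
        ((Filter.tendsto_const_mul_atTop_of_neg hneg).2 Filter.tendsto_id)
      refine h.congr fun x => ?_
      field_simp
      rw [id_eq]; ring
    have hs : 0 < -(t * α) / k := div_pos (by nlinarith) hkp
    exact aux_not_integrableOn_Iio (aux_tendsto_integrand α η k t hα hk Filter.atBot hu hs)
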